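/- The local contrastive value function is in general neither submodular nor supermodular: there exist n ∈ ℕ, a classifier f : {0,1}^n → {0,1}, a distribution D on {0,1}^n, an input x with Pr(x) > 0, and two choices of S ⊆ S' ⊆ {1,…,n} with i ∉ S' such that in one choice v^ℓ_con(S ∪ {i}) − v^ℓ_con(S) < v^ℓ_con(S' ∪ {i}) − v^ℓ_con(S') (violating submodularity) and in the other v^ℓ_con(S ∪ {i}) − v^ℓ_con(S) > v^ℓ_con(S' ∪ {i}) − v^ℓ_con(S') (violating supermodularity). -/

import Mathlib

open Finset

open Classical in
/-- Conditional probability `Pr(A | B) = Pr(A ∩ B) / Pr(B)` over a finite space,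
with mass function `P`. -/
noncomputable def condPr {F : Type*} [Fintype F] (P : F → ℝ) (A B : F → Prop) : ℝ :=
  (∑ z, if A z ∧ B z then P z else 0) / (∑ z, if B z then P z else 0)

open Classical in
/-- The local contrastive value function at the point `x`:
`v^ℓ_con(S) = Pr_{z∼D}(f z ≠ f x | z_S̄ = x_S̄)`, where `S̄ = {1,…,n} \ S`. -/
noncomputable def vlCon {n : ℕ} (f : (Fin n → Bool) → Bool)
    (P : (Fin n → Bool) → ℝ) (x : Fin n → Bool) (S : Finset (Fin n)) : ℝ :=
  condPr P (fun z => f z ≠ f x) (fun z => ∀ i ∈ Sᶜ, z i = x i)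

/-- Expansion of a sum over all of `Fin 3 → Bool` into its 8 terms. -/
lemma sum_pi3 (g : (Fin 3 → Bool) → ℝ) :
    ∑ z, g z =
      g ![false,false,false] + g ![false,false,true] + g ![false,true,false] +
      g ![false,true,true] + g ![true,false,false] + g ![true,false,true] +
      g ![true,true,false] + g ![true,true,true] := by
  rw [show (univ : Finset (Fin 3 → Bool)) =
      {![false,false,false], ![false,false,true], ![false,true,false],
       ![false,true,true], ![true,false,false], ![true,false,true],
       ![true,true,false], ![true,true,true]} from by decide]
  rw [Finset.sum_insert (by decide), Finset.sum_insert (by decide),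
      Finset.sum_insert (by decide), Finset.sum_insert (by decide),
      Finset.sum_insert (by decide), Finset.sum_insert (by decide),
      Finset.sum_insert (by decide), Finset.sum_singleton]
  ring

/-- The counterexample classifier: true exactly on `(1,1,0)` and `(0,0,1)`. -/
abbrev myF : (Fin 3 → Bool) → Bool :=
  fun z => decide (z = ![true,true,false] ∨ z = ![false,false,true])

lemma myV_empty : vlCon myF (fun _ => 1/8) ![false,false,false] (∅ : Finset (Fin 3)) = 0 := by
  simp only [vlCon, condPr, sum_pi3]
  norm_num [Fin.forall_fin_succ, Matrix.cons_val_zero, Matrix.cons_val_one, Matrix.head_cons,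
    Finset.mem_compl, Finset.mem_singleton, myF]
  all_goals first
    | (simp (config := { decide := true }) only []; norm_num)
    | norm_num
    | rfl

lemma myV_0 : vlCon myF (fun _ => 1/8) ![false,false,false] ({0} : Finset (Fin 3)) = 0 := by
  simp only [vlCon, condPr, sum_pi3]
  norm_num [Fin.forall_fin_succ, Matrix.cons_val_zero, Matrix.cons_val_one, Matrix.head_cons,
    Finset.mem_compl, Finset.mem_singleton, myF]
  all_goals first
    | (simp (config := { decide := true }) only []; norm_num)
    | norm_num
    | rfl

lemma myV_1 : vlCon myF (fun _ => 1/8) ![false,false,false] ({1} : Finset (Fin 3)) = 0 := by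
  simp only [vlCon, condPr, sum_pi3]
  norm_num [Fin.forall_fin_succ, Matrix.cons_val_zero, Matrix.cons_val_one, Matrix.head_cons,
    Finset.mem_compl, Finset.mem_singleton, myF]
  all_goals first
    | (simp (config := { decide := true }) only []; norm_num)
    | norm_num
    | rfl
  all_goals exact Or.inl (by decide)

lemma myV_2 : vlCon myF (fun _ => 1/8) ![false,false,false] ({2} : Finset (Fin 3)) = 1/2 := by
  simp only [vlCon, condPr, sum_pi3]
  norm_num [Fin.forall_fin_succ, Matrix.cons_val_zero, Matrix.cons_val_one, Matrix.head_cons,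
    Finset.mem_compl, Finset.mem_singleton, myF]
  all_goals first
    | (simp (config := { decide := true }) only []; norm_num)
    | norm_num
    | rfl

lemma myV_01 : vlCon myF (fun _ => 1/8) ![false,false,false] ({0,1} : Finset (Fin 3)) = 1/4 := by
  simp only [vlCon, condPr, sum_pi3]
  norm_num [Fin.forall_fin_succ, Matrix.cons_val_zero, Matrix.cons_val_one, Matrix.head_cons,
    Finset.mem_compl, Finset.mem_insert, Finset.mem_singleton, myF]
  all_goals first
    | (simp (config := { decide := true }) only []; norm_num)
    | norm_num
    | rfl

lemma myV_02 : vlCon myF (fun _ => 1/8) ![false,false,false] ({0,2} : Finset (Fin 3)) = 1/4 := by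
  simp only [vlCon, condPr, sum_pi3]
  norm_num [Fin.forall_fin_succ, Matrix.cons_val_zero, Matrix.cons_val_one, Matrix.head_cons,
    Finset.mem_compl, Finset.mem_insert, Finset.mem_singleton, myF]
  all_goals first
    | (simp (config := { decide := true }) only []; norm_num)
    | norm_num
    | rfl

/-- the local contrastive value function is in general neither
submodular nor supermodular: there are `n`, `f`, a distribution, a point `x`
of positive probability, and two choices of `S ⊆ S'` with `i ∉ S'`, one
violating submodularity and one violating supermodularity. -/
theorem vlCon_neither_submodular_nor_supermodular :
    ∃ (n : ℕ) (f : (Fin n → Bool) → Bool) (P : (Fin n → Bool) → ℝ),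
      (∀ z, 0 ≤ P z) ∧ (∑ z, P z = 1) ∧
      ∃ x : Fin n → Bool, 0 < P x ∧
        (∃ (S S' : Finset (Fin n)) (i : Fin n), S ⊆ S' ∧ i ∉ S' ∧
          vlCon f P x (insert i S) - vlCon f P x S <
            vlCon f P x (insert i S') - vlCon f P x S') ∧
        (∃ (S S' : Finset (Fin n)) (i : Fin n), S ⊆ S' ∧ i ∉ S' ∧
          vlCon f P x (insert i S') - vlCon f P x S' <
            vlCon f P x (insert i S) - vlCon f P x S) := by
  refine ⟨3, myF, fun _ => 1/8, fun z => by norm_num, ?_, ![false,false,false], by norm_num,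
    ⟨∅, {1}, 0, by simp, by decide, ?_⟩, ⟨∅, {2}, 0, by simp, by decide, ?_⟩⟩
  · rw [sum_pi3]; norm_num
  · have h1 : insert (0 : Fin 3) (∅ : Finset (Fin 3)) = {0} := by decide
    have h2 : insert (0 : Fin 3) ({1} : Finset (Fin 3)) = {0,1} := by decide
    rw [h1, h2, myV_empty, myV_0, myV_1, myV_01]
    norm_num
  · have h1 : insert (0 : Fin 3) (∅ : Finset (Fin 3)) = {0} := by decide
    have h2 : insert (0 : Fin 3) ({2} : Finset (Fin 3)) = {0,2} := by decide
    rw [h1, h2, myV_empty, myV_0, myV_2, myV_02]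
    norm_num
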